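/- Fix α ∈ (0,1), σ_Z ≥ 0 and k > 0 (k represents the fixed ratio τ_Q/σ_β). For β ∈ (0,1) write σ_β = √(β² + (1−β)²) and c(β) = αβ + (1−α)(1−β), and let σ_α = √(α² + (1−α)² + σ_Z²). Then both the mean normalized quality F(β) = (c(β)/(σ_α σ_β))·σ_α·H(k σ_β σ_α / c(β)) and the admitted fraction N(β) = 1 − Φ(k σ_β σ_α / c(β)) are strictly increasing for β ∈ (0,α) and strictly decreasing for β ∈ (α,1); in particular both attain their maximum over (0,1) at β = α. -/

import Mathlib

open MeasureTheory Real Set Filter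

/-- Standard normal pdf. -/
noncomputable def phi (x : ℝ) : ℝ := Real.exp (-x ^ 2 / 2) / Real.sqrt (2 * Real.pi)

/-- Standard normal cdf. -/
noncomputable def Phi (x : ℝ) : ℝ := ∫ y in Set.Iic x, phi y

/-- Standard normal hazard rate. -/
noncomputable def Haz (x : ℝ) : ℝ := phi x / (1 - Phi x)

lemma phi_pos (x : ℝ) : 0 < phi x :=
  div_pos (Real.exp_pos _) (Real.sqrt_pos.2 (by positivity))

lemma continuous_phi : Continuous phi := by
  unfold phi
  fun_prop

lemma phi_eq (x : ℝ) : phi x = Real.exp (-(1/2) * x ^ 2) / Real.sqrt (2 * Real.pi) := by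
  unfold phi; ring_nf

lemma integrable_phi : Integrable phi := by
  have h : Integrable (fun x : ℝ => Real.exp (-(1/2) * x ^ 2)) :=
    integrable_exp_neg_mul_sq (by norm_num)
  have := h.div_const (Real.sqrt (2 * Real.pi))
  refine this.congr (Filter.Eventually.of_forall fun x => ?_)
  rw [phi_eq]

lemma integral_phi : ∫ x, phi x = 1 := by
  have h : ∫ x : ℝ, Real.exp (-(1/2) * x ^ 2) = Real.sqrt (Real.pi / (1/2)) :=
    integral_gaussian (1/2)
  have h2 : ∫ x, phi x = (∫ x : ℝ, Real.exp (-(1/2) * x ^ 2)) / Real.sqrt (2 * Real.pi) := by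
    rw [← integral_div]
    exact integral_congr_ae (Filter.Eventually.of_forall fun x => (phi_eq x))
  rw [h2, h]
  rw [div_eq_one_iff_eq (by positivity)]
  congr 1
  ring

lemma one_sub_Phi (x : ℝ) : 1 - Phi x = ∫ y in Set.Ioi x, phi y := by
  have := intervalIntegral.integral_Iic_add_Ioi (b := x) integrable_phi.integrableOn integrable_phi.integrableOn
  rw [integral_phi] at this
  unfold Phi
  linarith

lemma setIntegral_phi_pos {s : Set ℝ} (hs : MeasurableSet s) (hμ : 0 < volume s) :
    0 < ∫ y in s, phi y := by
  rw [setIntegral_pos_iff_support_of_nonneg_ae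
      (Filter.Eventually.of_forall fun y => (phi_pos y).le) integrable_phi.integrableOn]
  have : Function.support phi = Set.univ := by
    ext y; simp [Function.mem_support, (phi_pos y).ne']
  rw [this, Set.univ_inter]
  exact hμ

lemma one_sub_Phi_pos (x : ℝ) : 0 < 1 - Phi x := by
  rw [one_sub_Phi]
  exact setIntegral_phi_pos measurableSet_Ioi (by simp)

lemma Phi_strictMono : StrictMono Phi := by
  intro a b hab
  have h : Phi b - Phi a = ∫ y in a..b, phi y :=
    intervalIntegral.integral_Iic_sub_Iic integrable_phi.integrableOn integrable_phi.integrableOn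
  rw [intervalIntegral.integral_of_le hab.le] at h
  have : 0 < ∫ y in Set.Ioc a b, phi y :=
    setIntegral_phi_pos measurableSet_Ioc (by simp [hab])
  linarith

lemma hasDerivAt_Phi (x : ℝ) : HasDerivAt Phi (phi x) x := by
  have key : ∀ y, Phi y = Phi 0 + ∫ t in (0:ℝ)..y, phi t := by
    intro y
    have := intervalIntegral.integral_Iic_sub_Iic (a := (0:ℝ)) (b := y)
      integrable_phi.integrableOn integrable_phi.integrableOn
    unfold Phi; linarith
  have h := ((continuous_phi.integral_hasStrictDerivAt 0 x).hasDerivAt.const_add (Phi 0))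
  exact h.congr_of_eventuallyEq (Filter.Eventually.of_forall fun y => (key y))

lemma hasDerivAt_phi (x : ℝ) : HasDerivAt phi (-x * phi x) x := by
  have h1 : HasDerivAt (fun t : ℝ => -t ^ 2 / 2) (-x) x := by
    have := ((hasDerivAt_pow 2 x).neg.div_const 2)
    simpa using this.congr_deriv (by ring)
  have h2 := (h1.exp).div_const (Real.sqrt (2 * Real.pi))
  have : phi = fun t : ℝ => Real.exp (-t ^ 2 / 2) / Real.sqrt (2 * Real.pi) := rfl
  rw [this]
  refine h2.congr_deriv ?_
  simp only [phi]
  ring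

noncomputable def mf (t : ℝ) : ℝ := t * phi t / (1 + t ^ 2)
noncomputable def mf' (t : ℝ) : ℝ := phi t * (1 - 2 * t ^ 2 - t ^ 4) / (1 + t ^ 2) ^ 2

lemma hasDerivAt_mf (t : ℝ) : HasDerivAt mf (mf' t) t := by
  have hu : HasDerivAt (fun t : ℝ => t * phi t) (phi t * (1 - t ^ 2)) t := by
    have := (hasDerivAt_id t).mul (hasDerivAt_phi t)
    refine this.congr_deriv ?_
    simp only [id]
    ring
  have hv : HasDerivAt (fun t : ℝ => 1 + t ^ 2) (2 * t) t := by
    have := (hasDerivAt_pow 2 t).const_add 1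
    refine this.congr_deriv ?_; ring
  have hvne : (1 + t ^ 2) ≠ 0 := by positivity
  have := hu.div hv hvne
  refine this.congr_deriv ?_
  unfold mf'
  field_simp
  ring

lemma tendsto_phi_atTop : Tendsto phi atTop (nhds 0) := by
  have h1 : Tendsto (fun t : ℝ => -t ^ 2 / 2) atTop atBot := by
    apply Tendsto.atBot_div_const (by norm_num)
    exact tendsto_neg_atBot_iff.mpr (tendsto_pow_atTop (by norm_num))
  have := (Real.tendsto_exp_atBot.comp h1).div_const (Real.sqrt (2 * Real.pi))
  have heq : phi = fun a : ℝ => Real.exp (-a ^ 2 / 2) / Real.sqrt (2 * Real.pi) := rfl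
  rw [heq]
  simpa [Function.comp] using this

lemma tendsto_mf_atTop : Tendsto mf atTop (nhds 0) := by
  apply squeeze_zero' (g := phi)
  · filter_upwards [eventually_ge_atTop (0:ℝ)] with t ht
    exact div_nonneg (mul_nonneg ht (phi_pos t).le) (by positivity)
  · filter_upwards [eventually_ge_atTop (0:ℝ)] with t ht
    unfold mf
    rw [div_le_iff₀ (by positivity)]
    nlinarith [phi_pos t, sq_nonneg t, sq_nonneg (t - 1)]
  · exact tendsto_phi_atTop

lemma abs_mf'_le (t : ℝ) : |mf' t| ≤ phi t := by
  unfold mf'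
  rw [abs_div, abs_mul, abs_of_pos (phi_pos t), abs_of_pos (show (0:ℝ) < (1 + t^2)^2 by positivity)]
  rw [div_le_iff₀ (by positivity)]
  have h : |1 - 2 * t ^ 2 - t ^ 4| ≤ (1 + t ^ 2) ^ 2 := by
    rw [abs_le]; constructor <;> nlinarith [sq_nonneg t, sq_nonneg (t^2)]
  nlinarith [phi_pos t, abs_nonneg (1 - 2 * t ^ 2 - t ^ 4)]

lemma continuous_mf' : Continuous mf' := by
  unfold mf'
  apply Continuous.div
  · exact continuous_phi.mul (by continuity)
  · continuity
  · intro t; positivity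

lemma integrableOn_mf' (x : ℝ) : IntegrableOn mf' (Set.Ioi x) := by
  apply Integrable.mono integrable_phi.integrableOn
    (continuous_mf'.aestronglyMeasurable.restrict)
  filter_upwards with t
  rw [Real.norm_eq_abs, Real.norm_eq_abs, abs_of_pos (phi_pos t)]
  exact abs_mf'_le t

lemma integral_mf' (x : ℝ) : ∫ t in Set.Ioi x, mf' t = -mf x := by
  have := integral_Ioi_of_hasDerivAt_of_tendsto (f := mf) (f' := mf') (a := x)
    (Continuous.continuousWithinAt (by
      unfold mf
      apply Continuous.div
      · exact (continuous_id.mul continuous_phi)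
      · continuity
      · intro t; positivity))
    (fun t _ => hasDerivAt_mf t) (integrableOn_mf' x) tendsto_mf_atTop
  rw [this]; ring

lemma mills (x : ℝ) : x * phi x < (1 + x ^ 2) * (1 - Phi x) := by
  have key : mf x < 1 - Phi x := by
    have h1 : (1 - Phi x) - mf x = ∫ t in Set.Ioi x, (phi t + mf' t) := by
      rw [integral_add integrable_phi.integrableOn (integrableOn_mf' x), ← one_sub_Phi,
        integral_mf' x]
      ring
    have h2 : 0 < ∫ t in Set.Ioi x, (phi t + mf' t) := by
      have hpos : ∀ t : ℝ, 0 < phi t + mf' t := by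
        intro t
        have : phi t + mf' t = phi t * 2 / (1 + t ^ 2) ^ 2 := by
          unfold mf'; field_simp; ring
        rw [this]
        have := phi_pos t
        positivity
      rw [setIntegral_pos_iff_support_of_nonneg_ae
          (Filter.Eventually.of_forall fun t => (hpos t).le)
          ((integrable_phi.integrableOn).add (integrableOn_mf' x))]
      have : Function.support (fun t => phi t + mf' t) = Set.univ := by
        ext t; simp [Function.mem_support, (hpos t).ne']
      rw [this, Set.univ_inter]
      simp
    linarith
  have h3 : mf x = x * phi x / (1 + x ^ 2) := rfl
  rw [h3] at key
  have : (0:ℝ) < 1 + x ^ 2 := by positivity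
  rw [div_lt_iff₀ this] at key
  linarith [key]

noncomputable def Hd (x : ℝ) : ℝ :=
  ((-x * phi x) * (1 - Phi x) + phi x * phi x) / (1 - Phi x) ^ 2

lemma hasDerivAt_Haz (x : ℝ) : HasDerivAt Haz (Hd x) x := by
  have h := (hasDerivAt_phi x).div ((hasDerivAt_Phi x).const_sub 1) (one_sub_Phi_pos x).ne'
  have : Haz = fun x => phi x / (1 - Phi x) := rfl
  rw [this]
  refine h.congr_deriv ?_
  unfold Hd
  ring

lemma G_hasDeriv (a r : ℝ) (hr : r ≠ 0) :
    HasDerivAt (fun s => Haz (a * s) / s) ((Hd (a * r) * a * r - Haz (a * r)) / r ^ 2) r := by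
  have h1 : HasDerivAt (fun s : ℝ => Haz (a * s)) (Hd (a * r) * a) r := by
    have := (hasDerivAt_Haz (a * r)).comp r ((hasDerivAt_id r).const_mul a)
    exact this.congr_deriv (by ring)
  have := h1.div (hasDerivAt_id r) hr
  refine this.congr_deriv ?_
  simp only [id]
  ring

lemma G_deriv_neg (a r : ℝ) (ha : 0 < a) (hr : 0 < r) :
    (Hd (a * r) * a * r - Haz (a * r)) / r ^ 2 < 0 := by
  apply div_neg_of_neg_of_pos _ (by positivity)
  set x := a * r with hx
  have hxpos : 0 < x := mul_pos ha hr
  have hφ := phi_pos x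
  have hΦ := one_sub_Phi_pos x
  have hM := mills x
  have hH : Haz x = phi x / (1 - Phi x) := rfl
  have hHd : Hd x = ((-x * phi x) * (1 - Phi x) + phi x * phi x) / (1 - Phi x) ^ 2 := rfl
  have key : Hd x * x - Haz x =
      (phi x * (x * phi x - (1 + x ^ 2) * (1 - Phi x))) / (1 - Phi x) ^ 2 := by
    rw [hHd, hH]
    field_simp
    ring
  have h2 : Hd x * a * r - Haz x = Hd x * x - Haz x := by rw [hx]; ring
  rw [h2, key]
  apply div_neg_of_neg_of_pos _ (by positivity)
  nlinarith
  
lemma G_anti (a : ℝ) (ha : 0 < a) : StrictAntiOn (fun r => Haz (a * r) / r) (Set.Ioi 0) := by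
  apply strictAntiOn_of_deriv_neg (convex_Ioi 0)
  · intro r hr
    exact ((G_hasDeriv a r (ne_of_gt hr)).continuousAt).continuousWithinAt
  · intro r hr
    rw [interior_Ioi] at hr
    rw [(G_hasDeriv a r (ne_of_gt hr)).deriv]
    exact G_deriv_neg a r ha hr

lemma key_poly (a x y : ℝ) (ha1 : a < 1) (hx : 0 < x) (hxy : x < y) (hya : y ≤ a) :
    (2*y^2 - 2*y + 1) * (a*x + (1-a)*(1-x))^2 < (2*x^2 - 2*x + 1) * (a*y + (1-a)*(1-y))^2 := by
  have hupos : 0 < a - x := by linarith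
  have hvnn : 0 ≤ a - y := by linarith
  have hva : a - y < a := by linarith
  have hua : a - x < a := by linarith
  have hB : 0 < ((a-x) + (a-y)) * (1 - 2*a + 2*a^2) + 2*(a-x)*(a-y)*(1 - 2*a) := by
    rcases le_or_gt (2*a) 1 with h | h
    · have h1 : 0 < ((a-x) + (a-y)) * (1 - 2*a + 2*a^2) :=
        mul_pos (by linarith) (by nlinarith [sq_nonneg (2*a - 1)])
      have h2 : 0 ≤ 2*(a-x)*(a-y)*(1 - 2*a) := by
        apply mul_nonneg (by nlinarith) (by linarith)
      linarith
    · have h2uv : 2*(a-x)*(a-y) ≤ a*((a-x)+(a-y)) := by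
        nlinarith [mul_nonneg hupos.le (sub_nonneg.2 hva.le), mul_nonneg hvnn (sub_nonneg.2 hua.le)]
      have h3 : 2*(a-x)*(a-y)*(1-2*a) ≥ a*((a-x)+(a-y))*(1-2*a) := by
        have := mul_le_mul_of_nonpos_right h2uv (by linarith : 1 - 2*a ≤ 0)
        linarith
      have h4 : 0 < ((a-x)+(a-y)) * (1 - a) := mul_pos (by linarith) (by linarith)
      nlinarith [h3, h4]
  nlinarith [mul_pos (sub_pos.2 hxy) hB]

theorem stmt9 (α σZ k : ℝ) (hα : α ∈ Set.Ioo (0 : ℝ) 1) (hσZ : 0 ≤ σZ) (hk : 0 < k)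
    (σα : ℝ) (hσα : σα = Real.sqrt (α ^ 2 + (1 - α) ^ 2 + σZ ^ 2))
    (σβ c F N : ℝ → ℝ)
    (hσβ : ∀ β, σβ β = Real.sqrt (β ^ 2 + (1 - β) ^ 2))
    (hc : ∀ β, c β = α * β + (1 - α) * (1 - β))
    (hF : ∀ β, F β = c β / (σα * σβ β) * σα * Haz (k * σβ β * σα / c β))
    (hN : ∀ β, N β = 1 - Phi (k * σβ β * σα / c β)) :
    StrictMonoOn F (Set.Ioo 0 α) ∧ StrictAntiOn F (Set.Ioo α 1) ∧
    StrictMonoOn N (Set.Ioo 0 α) ∧ StrictAntiOn N (Set.Ioo α 1) ∧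
    (∀ β ∈ Set.Ioo (0 : ℝ) 1, β ≠ α → F β < F α ∧ N β < N α) := by
  obtain ⟨hα0, hα1⟩ := hα
  have hσαpos : 0 < σα := by
    rw [hσα]
    apply Real.sqrt_pos.2
    nlinarith
  set a := k * σα with ha_def
  have ha : 0 < a := mul_pos hk hσαpos
  -- basic positivity
  have hspos : ∀ t : ℝ, 0 < t ^ 2 + (1 - t) ^ 2 := by intro t; nlinarith [sq_nonneg t, sq_nonneg (1-t), sq_nonneg (2*t-1)]
  have hσβpos : ∀ t : ℝ, 0 < σβ t := by
    intro t; rw [hσβ]; exact Real.sqrt_pos.2 (hspos t)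
  have hcpos : ∀ t : ℝ, 0 < t → t < 1 → 0 < c t := by
    intro t ht0 ht1; rw [hc]
    have := mul_pos hα0 ht0
    have := mul_pos (by linarith : (0:ℝ) < 1 - α) (by linarith : (0:ℝ) < 1 - t)
    linarith
  -- r
  set r : ℝ → ℝ := fun t => σβ t / c t with hr_def
  have hrpos : ∀ t : ℝ, 0 < t → t < 1 → 0 < r t := by
    intro t ht0 ht1; exact div_pos (hσβpos t) (hcpos t ht0 ht1)
  have hsq : ∀ t : ℝ, σβ t ^ 2 = 2*t^2 - 2*t + 1 := by
    intro t; rw [hσβ, Real.sq_sqrt (hspos t).le]; ring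
  have hceq : ∀ t : ℝ, c t = α*t + (1-α)*(1-t) := by intro t; rw [hc]
  -- r comparison from key_poly
  have hr_aux : ∀ x y : ℝ, 0 < x → x < 1 → 0 < y → y < 1 →
      (2*y^2 - 2*y + 1) * (c x)^2 < (2*x^2 - 2*x + 1) * (c y)^2 → r y < r x := by
    intro x y hx0 hx1 hy0 hy1 hkey
    have hsx := hσβpos x; have hsy := hσβpos y
    have hcx := hcpos x hx0 hx1; have hcy := hcpos y hy0 hy1
    rw [hr_def]
    rw [div_lt_div_iff₀ hcy hcx]
    have h2 : (σβ y * c x)^2 < (σβ x * c y)^2 := by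
      have e1 : (σβ y * c x)^2 = (2*y^2 - 2*y + 1) * (c x)^2 := by rw [mul_pow, hsq]
      have e2 : (σβ x * c y)^2 = (2*x^2 - 2*x + 1) * (c y)^2 := by rw [mul_pow, hsq]
      rw [e1, e2]; exact hkey
    have hpos1 : 0 < σβ y * c x := mul_pos hsy hcx
    exact (pow_lt_pow_iff_left₀ hpos1.le (mul_pos hsx hcy).le (by norm_num)).1 h2
  have hr_left : ∀ x y : ℝ, 0 < x → x < y → y ≤ α → r y < r x := by
    intro x y hx0 hxy hya
    apply hr_aux x y hx0 (by linarith) (by linarith) (by linarith)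
    have := key_poly α x y hα1 hx0 hxy hya
    rw [hceq x, hceq y]
    exact this
  have hr_right : ∀ x y : ℝ, α ≤ x → x < y → y < 1 → r x < r y := by
    intro x y hax hxy hy1
    apply hr_aux y x (by linarith) hy1 (by linarith) (by linarith)
    have := key_poly (1-α) (1-y) (1-x) (by linarith) (by linarith) (by linarith) (by linarith)
    have ex : c x = (1-α)*(1-x) + (1-(1-α))*(1-(1-x)) := by rw [hceq]; ring
    have ey : c y = (1-α)*(1-y) + (1-(1-α))*(1-(1-y)) := by rw [hceq]; ring
    have esx : 2*x^2 - 2*x + 1 = 2*(1-x)^2 - 2*(1-x) + 1 := by ring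
    have esy : 2*y^2 - 2*y + 1 = 2*(1-y)^2 - 2*(1-y) + 1 := by ring
    rw [ex, ey, esx, esy]
    convert this using 2 <;> ring
  -- rewriting F and N through r
  have harg : ∀ t : ℝ, 0 < t → t < 1 → k * σβ t * σα / c t = a * r t := by
    intro t ht0 ht1
    rw [hr_def, ha_def]
    field_simp
  have hFr : ∀ t : ℝ, 0 < t → t < 1 → F t = Haz (a * r t) / r t := by
    intro t ht0 ht1
    rw [hF, harg t ht0 ht1, hr_def]
    have hcx := hcpos t ht0 ht1
    have hsx := hσβpos t
    field_simp
  have hNr : ∀ t : ℝ, 0 < t → t < 1 → N t = 1 - Phi (a * r t) := by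
    intro t ht0 ht1; rw [hN, harg t ht0 ht1]
  -- generic comparisons
  have hFcomp : ∀ x y : ℝ, 0 < x → x < 1 → 0 < y → y < 1 → r y < r x → F x < F y := by
    intro x y hx0 hx1 hy0 hy1 hrlt
    rw [hFr x hx0 hx1, hFr y hy0 hy1]
    exact G_anti a ha (hrpos y hy0 hy1) (hrpos x hx0 hx1) hrlt
  have hNcomp : ∀ x y : ℝ, 0 < x → x < 1 → 0 < y → y < 1 → r y < r x → N x < N y := by
    intro x y hx0 hx1 hy0 hy1 hrlt
    rw [hNr x hx0 hx1, hNr y hy0 hy1]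
    have := Phi_strictMono ((mul_lt_mul_iff_right₀ ha).2 hrlt)
    linarith
  refine ⟨?_, ?_, ?_, ?_, ?_⟩
  · intro x hx y hy hxy
    exact hFcomp x y hx.1 (by linarith [hx.2]) hy.1 (by linarith [hy.2])
      (hr_left x y hx.1 hxy hy.2.le)
  · intro x hx y hy hxy
    exact hFcomp y x (by linarith [hy.1]) hy.2 (by linarith [hx.1]) (by linarith [hx.2])
      (hr_right x y hx.1.le hxy hy.2)
  · intro x hx y hy hxy
    exact hNcomp x y hx.1 (by linarith [hx.2]) hy.1 (by linarith [hy.2])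
      (hr_left x y hx.1 hxy hy.2.le)
  · intro x hx y hy hxy
    exact hNcomp y x (by linarith [hy.1]) hy.2 (by linarith [hx.1]) (by linarith [hx.2])
      (hr_right x y hx.1.le hxy hy.2)
  · intro β hβ hne
    rcases lt_or_gt_of_ne hne with h | h
    · have hrlt := hr_left β α hβ.1 h le_rfl
      exact ⟨hFcomp β α hβ.1 hβ.2 hα0 hα1 hrlt, hNcomp β α hβ.1 hβ.2 hα0 hα1 hrlt⟩
    · have hrlt := hr_right α β le_rfl h hβ.2
      exact ⟨hFcomp β α hβ.1 hβ.2 hα0 hα1 hrlt, hNcomp β α hβ.1 hβ.2 hα0 hα1 hrlt⟩
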